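/- In model (1), if ω > 0 and δ > 0 and the solution is nonnegative and bounded, then E(t) + E_Q(t) → 0 and I_a(t) + I_aQ(t) + I_sQ(t) → 0 as t → ∞ (the epidemic dies out in every forward limit). -/

import Mathlib

open MeasureTheory Filter Set

/-- Auxiliary sequence of times for the Barbălat-type argument. -/
def barbSeq (T : ℝ → ℝ) (d : ℝ) : ℕ → ℝ
  | 0 => T 0
  | n + 1 => T (barbSeq T d n + d)

/-- A Barbălat-type lemma without integrals: if `F' = f`, `f ≥ 0` on `[0,∞)`,
`|f'| ≤ C` on `[0,∞)` and `F ≤ B` on `[0,∞)`, then `f → 0` at `+∞`. -/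
lemma barbalat {F f f' : ℝ → ℝ} {C B : ℝ} (hC : 0 < C)
    (hF : ∀ t, HasDerivAt F (f t) t)
    (hf : ∀ t, HasDerivAt f (f' t) t)
    (hbd : ∀ t, 0 ≤ t → |f' t| ≤ C)
    (hnn : ∀ t, 0 ≤ t → 0 ≤ f t)
    (hB : ∀ t, 0 ≤ t → F t ≤ B) :
    Tendsto f atTop (nhds 0) := by
  by_contra hcon
  rw [Metric.tendsto_atTop] at hcon
  push_neg at hcon
  obtain ⟨ε, hε, H⟩ := hcon
  have H' : ∀ N : ℝ, ∃ t, 0 ≤ t ∧ N ≤ t ∧ ε ≤ f t := by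
    intro N
    obtain ⟨t, ht, hdist⟩ := H (max N 0)
    have ht0 : (0:ℝ) ≤ t := le_trans (le_max_right N 0) ht
    refine ⟨t, ht0, le_trans (le_max_left N 0) ht, ?_⟩
    rwa [Real.dist_eq, sub_zero, abs_of_nonneg (hnn t ht0)] at hdist
  choose T hT0 hTge hTf using H'
  set d : ℝ := ε / (2 * C) with hd_def
  have hd : 0 < d := by positivity
  have hCd : C * d = ε / 2 := by
    rw [hd_def]; field_simp
  -- if ε ≤ f t at a nonnegative time t, then ε/2 ≤ f on [t, t+d]
  have klip : ∀ t, 0 ≤ t → ε ≤ f t → ∀ s ∈ Icc t (t + d), ε / 2 ≤ f s := by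
    intro t ht hft s hs
    have key := norm_image_sub_le_of_norm_deriv_le_segment'
      (f := f) (f' := f') (a := t) (b := t + d)
      (fun x _ => (hf x).hasDerivWithinAt)
      (fun x hx => by
        rw [Real.norm_eq_abs]; exact hbd x (le_trans ht hx.1)) s hs
    rw [Real.norm_eq_abs] at key
    have h1 : C * (s - t) ≤ C * d :=
      mul_le_mul_of_nonneg_left (by linarith [hs.2]) hC.le
    have h2 : f t - f s ≤ ε / 2 := by
      have := neg_abs_le (f s - f t)
      linarith
    linarith
  -- increment of F over [t, t+d]
  have kincr : ∀ t, 0 ≤ t → ε ≤ f t → F t + ε / 2 * d ≤ F (t + d) := by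
    intro t ht hft
    have key := (convex_Icc t (t + d)).mul_sub_le_image_sub_of_le_deriv
      (f := F) (C := ε / 2)
      (fun x _ => (hF x).continuousAt.continuousWithinAt)
      (fun x _ => (hF x).differentiableAt.differentiableWithinAt)
      (fun x hx => by
        rw [interior_Icc] at hx
        rw [(hF x).deriv]
        exact klip t ht hft x ⟨hx.1.le, hx.2.le⟩)
      t (left_mem_Icc.2 (by linarith)) (t + d) (right_mem_Icc.2 (by linarith))
      (by linarith)
    have : ε / 2 * (t + d - t) = ε / 2 * d := by ring
    linarith [key, this.symm.le]
  -- F is monotone on [0,∞)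
  have kmono : ∀ a b : ℝ, 0 ≤ a → a ≤ b → F a ≤ F b := by
    intro a b ha hab
    have key := (convex_Icc a b).mul_sub_le_image_sub_of_le_deriv
      (f := F) (C := (0:ℝ))
      (fun x _ => (hF x).continuousAt.continuousWithinAt)
      (fun x _ => (hF x).differentiableAt.differentiableWithinAt)
      (fun x hx => by
        rw [interior_Icc] at hx
        rw [(hF x).deriv]
        exact hnn x (ha.trans hx.1.le))
      a (left_mem_Icc.2 hab) b (right_mem_Icc.2 hab) hab
    linarith
  set g : ℕ → ℝ := barbSeq T d with hg_def
  have hg0 : g 0 = T 0 := rfl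
  have hgs : ∀ n, g (n + 1) = T (g n + d) := fun n => rfl
  have hgnn : ∀ n, 0 ≤ g n := by
    intro n
    cases n with
    | zero => rw [hg0]; exact hT0 0
    | succ m => rw [hgs]; exact hT0 _
  have hgf : ∀ n, ε ≤ f (g n) := by
    intro n
    cases n with
    | zero => rw [hg0]; exact hTf 0
    | succ m => rw [hgs]; exact hTf _
  have hgstep : ∀ n, g n + d ≤ g (n + 1) := by
    intro n; rw [hgs]; exact hTge _
  have main : ∀ n : ℕ, F (g 0) + (n + 1) * (ε / 2 * d) ≤ F (g n + d) := by
    intro n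
    induction n with
    | zero =>
      have := kincr (g 0) (hgnn 0) (hgf 0)
      push_cast
      linarith
    | succ m ih =>
      have h1 := kincr (g (m + 1)) (hgnn (m + 1)) (hgf (m + 1))
      have h2 : F (g m + d) ≤ F (g (m + 1)) :=
        kmono _ _ (by linarith [hgnn m, hd.le]) (hgstep m)
      push_cast
      push_cast at ih
      linarith
  have hc : 0 < ε / 2 * d := by positivity
  obtain ⟨n, hn⟩ := exists_nat_gt ((B - F (g 0)) / (ε / 2 * d))
  have h1 := main n
  have h2 : F (g n + d) ≤ B := hB _ (by linarith [hgnn n, hd.le])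
  have h3 : B - F (g 0) < n * (ε / 2 * d) := (div_lt_iff₀ hc).mp hn
  nlinarith
structure Model1Sol (β ω δ ψ χ k ρ : ℝ) where
  S : ℝ → ℝ
  SQ : ℝ → ℝ
  E : ℝ → ℝ
  EQ : ℝ → ℝ
  Ia : ℝ → ℝ
  IaQ : ℝ → ℝ
  IsQ : ℝ → ℝ
  R : ℝ → ℝ
  RQ : ℝ → ℝ
  hS : ∀ t : ℝ, HasDerivAt S
    (-β * S t * Ia t - β * (1 - ρ) * S t * (IaQ t + IsQ t) - χ * IsQ t * S t) t
  hSQ : ∀ t : ℝ, HasDerivAt SQ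
    (-β * (1 - ρ) * SQ t * Ia t - β * (1 - ρ) ^ 2 * SQ t * (IaQ t + IsQ t)
      + χ * IsQ t * S t) t
  hE : ∀ t : ℝ, HasDerivAt E
    (β * S t * Ia t + β * (1 - ρ) * S t * (IaQ t + IsQ t) - ω * E t - χ * IsQ t * E t) t
  hEQ : ∀ t : ℝ, HasDerivAt EQ
    (β * (1 - ρ) * SQ t * Ia t + β * (1 - ρ) ^ 2 * SQ t * (IaQ t + IsQ t)
      - ω * EQ t + χ * IsQ t * E t) t
  hIa : ∀ t : ℝ, HasDerivAt Ia
    (k * ω * E t - χ * IsQ t * Ia t - δ * Ia t - ψ * Ia t) t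
  hIaQ : ∀ t : ℝ, HasDerivAt IaQ
    (k * ω * EQ t + χ * IsQ t * Ia t - δ * IaQ t - ψ * IaQ t) t
  hIsQ : ∀ t : ℝ, HasDerivAt IsQ
    ((1 - k) * ω * (E t + EQ t) + ψ * (Ia t + IaQ t) - δ * IsQ t) t
  hR : ∀ t : ℝ, HasDerivAt R
    (δ * (Ia t + IsQ t) - χ * IsQ t * R t) t
  hRQ : ∀ t : ℝ, HasDerivAt RQ
    (δ * IaQ t + χ * IsQ t * R t) t

set_option maxHeartbeats 1000000 in
/-- In model (1) with `ω, δ > 0`, along nonnegative bounded solutions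
(total population 1), the epidemic dies out: `E + E_Q → 0` and
`I_a + I_aQ + I_sQ → 0` as `t → ∞`. -/
theorem model1_epidemic_dies_out
    (β ω δ ψ χ k ρ : ℝ) (hβ : 0 < β) (hω : 0 < ω) (hδ : 0 < δ) (hψ : 0 ≤ ψ) (hχ : 0 ≤ χ)
    (hk : k ∈ Set.Icc (0 : ℝ) 1) (hρ : ρ ∈ Set.Icc (0 : ℝ) 1)
    (M : Model1Sol β ω δ ψ χ k ρ)
    (hnn : ∀ t : ℝ, 0 ≤ t →
      0 ≤ M.S t ∧ 0 ≤ M.SQ t ∧ 0 ≤ M.E t ∧ 0 ≤ M.EQ t ∧ 0 ≤ M.Ia t ∧ 0 ≤ M.IaQ t ∧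
        0 ≤ M.IsQ t ∧ 0 ≤ M.R t ∧ 0 ≤ M.RQ t)
    (hsum : ∀ t : ℝ, M.S t + M.SQ t + M.E t + M.EQ t + M.Ia t + M.IaQ t + M.IsQ t
      + M.R t + M.RQ t = 1) :
    Tendsto (fun t => M.E t + M.EQ t) atTop (nhds 0) ∧
    Tendsto (fun t => M.Ia t + M.IaQ t + M.IsQ t) atTop (nhds 0) := by

  obtain ⟨hk0, hk1⟩ := hk
  obtain ⟨hρ0, hρ1⟩ := hρ
  have hr0 : (0:ℝ) ≤ 1 - ρ := by linarith
  have hr1 : 1 - ρ ≤ 1 := by linarith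
  -- Part 1 : E + EQ → 0
  have part1 : Tendsto (fun t => M.E t + M.EQ t) atTop (nhds 0) := by
    have hF : ∀ t, HasDerivAt (fun t => -(M.S t + M.SQ t + M.E t + M.EQ t))
        (ω * (M.E t + M.EQ t)) t := by
      intro t
      have h := ((((M.hS t).add (M.hSQ t)).add (M.hE t)).add (M.hEQ t)).neg
      have e : ω * (M.E t + M.EQ t) =
          -(-β * M.S t * M.Ia t - β * (1 - ρ) * M.S t * (M.IaQ t + M.IsQ t)
            - χ * M.IsQ t * M.S t
            + (-β * (1 - ρ) * M.SQ t * M.Ia t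
              - β * (1 - ρ) ^ 2 * M.SQ t * (M.IaQ t + M.IsQ t) + χ * M.IsQ t * M.S t)
            + (β * M.S t * M.Ia t + β * (1 - ρ) * M.S t * (M.IaQ t + M.IsQ t)
              - ω * M.E t - χ * M.IsQ t * M.E t)
            + (β * (1 - ρ) * M.SQ t * M.Ia t
              + β * (1 - ρ) ^ 2 * M.SQ t * (M.IaQ t + M.IsQ t)
              - ω * M.EQ t + χ * M.IsQ t * M.E t)) := by ring
      rw [e]
      exact h
    have hf : ∀ t, HasDerivAt (fun t => ω * (M.E t + M.EQ t))
        (ω * ((β * M.S t * M.Ia t + β * (1 - ρ) * M.S t * (M.IaQ t + M.IsQ t)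
          - ω * M.E t - χ * M.IsQ t * M.E t)
          + (β * (1 - ρ) * M.SQ t * M.Ia t
            + β * (1 - ρ) ^ 2 * M.SQ t * (M.IaQ t + M.IsQ t)
            - ω * M.EQ t + χ * M.IsQ t * M.E t))) t := by
      intro t
      exact HasDerivAt.const_mul ω ((M.hE t).add (M.hEQ t))
    have key : Tendsto (fun t => ω * (M.E t + M.EQ t)) atTop (nhds 0) := by
      apply barbalat (C := ω * (6 * β + 2 * ω)) (B := (0:ℝ))
        (by positivity) hF hf
      · intro t ht
        obtain ⟨hS0, hSQ0, hE0, hEQ0, hIa0, hIaQ0, hIsQ0, hR0, hRQ0⟩ := hnn t ht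
        have hs := hsum t
        have hS1 : M.S t ≤ 1 := by linarith
        have hSQ1 : M.SQ t ≤ 1 := by linarith
        have hE1 : M.E t ≤ 1 := by linarith
        have hEQ1 : M.EQ t ≤ 1 := by linarith
        have hIa1 : M.Ia t ≤ 1 := by linarith
        have hIaQ1 : M.IaQ t ≤ 1 := by linarith
        have hIsQ1 : M.IsQ t ≤ 1 := by linarith
        have hu1 : (1 - ρ) * M.S t ≤ 1 := by nlinarith
        have hu0 : 0 ≤ (1 - ρ) * M.S t := mul_nonneg hr0 hS0
        have hw1 : (1 - ρ) * M.SQ t ≤ 1 := by nlinarith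
        have hw0 : 0 ≤ (1 - ρ) * M.SQ t := mul_nonneg hr0 hSQ0
        have hz1 : (1 - ρ) ^ 2 * M.SQ t ≤ 1 := by nlinarith
        have hz0 : 0 ≤ (1 - ρ) ^ 2 * M.SQ t := mul_nonneg (sq_nonneg _) hSQ0
        have hv0 : 0 ≤ M.IaQ t + M.IsQ t := by linarith
        have hv2 : M.IaQ t + M.IsQ t ≤ 2 := by linarith
        have hSIa : M.S t * M.Ia t ≤ 1 := by nlinarith
        have hSIa0 : 0 ≤ M.S t * M.Ia t := mul_nonneg hS0 hIa0
        have hWIa : ((1 - ρ) * M.SQ t) * M.Ia t ≤ 1 := by nlinarith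
        have hWIa0 : 0 ≤ ((1 - ρ) * M.SQ t) * M.Ia t := mul_nonneg hw0 hIa0
        have hUV : ((1 - ρ) * M.S t) * (M.IaQ t + M.IsQ t) ≤ 2 := by nlinarith
        have hUV0 : 0 ≤ ((1 - ρ) * M.S t) * (M.IaQ t + M.IsQ t) := mul_nonneg hu0 hv0
        have hZV : ((1 - ρ) ^ 2 * M.SQ t) * (M.IaQ t + M.IsQ t) ≤ 2 := by nlinarith
        have hZV0 : 0 ≤ ((1 - ρ) ^ 2 * M.SQ t) * (M.IaQ t + M.IsQ t) := mul_nonneg hz0 hv0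
        have hωω : (0:ℝ) ≤ ω * ω := mul_nonneg hω.le hω.le
        have hωβ : (0:ℝ) ≤ ω * β := mul_nonneg hω.le hβ.le
        rw [abs_le]
        have l1 := mul_le_mul_of_nonneg_left hSIa hωβ
        have l1' := mul_nonneg hωβ hSIa0
        have l2 := mul_le_mul_of_nonneg_left hUV hωβ
        have l2' := mul_nonneg hωβ hUV0
        have l3 := mul_le_mul_of_nonneg_left hWIa hωβ
        have l3' := mul_nonneg hωβ hWIa0
        have l4 := mul_le_mul_of_nonneg_left hZV hωβ
        have l4' := mul_nonneg hωβ hZV0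
        have m1 := mul_le_mul_of_nonneg_left hE1 hωω
        have m1' := mul_nonneg hωω hE0
        have m2 := mul_le_mul_of_nonneg_left hEQ1 hωω
        have m2' := mul_nonneg hωω hEQ0
        constructor
        · nlinarith
        · nlinarith
      · intro t ht
        obtain ⟨hS0, hSQ0, hE0, hEQ0, hIa0, hIaQ0, hIsQ0, hR0, hRQ0⟩ := hnn t ht
        positivity
      · intro t ht
        obtain ⟨hS0, hSQ0, hE0, hEQ0, hIa0, hIaQ0, hIsQ0, hR0, hRQ0⟩ := hnn t ht
        linarith
    have heq : (fun t => M.E t + M.EQ t)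
        = fun t => ω⁻¹ * (ω * (M.E t + M.EQ t)) := by
      funext t
      field_simp
    rw [heq]
    have := key.const_mul ω⁻¹
    simpa using this
  -- Part 2 : Ia + IaQ + IsQ → 0
  have part2 : Tendsto (fun t => M.Ia t + M.IaQ t + M.IsQ t) atTop (nhds 0) := by
    have hF : ∀ t, HasDerivAt (fun t => M.R t + M.RQ t)
        (δ * (M.Ia t + M.IaQ t + M.IsQ t)) t := by
      intro t
      have h := (M.hR t).add (M.hRQ t)
      have e : δ * (M.Ia t + M.IaQ t + M.IsQ t) =
          (δ * (M.Ia t + M.IsQ t) - χ * M.IsQ t * M.R t)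
          + (δ * M.IaQ t + χ * M.IsQ t * M.R t) := by ring
      rw [e]
      exact h
    have hf : ∀ t, HasDerivAt (fun t => δ * (M.Ia t + M.IaQ t + M.IsQ t))
        (δ * ((k * ω * M.E t - χ * M.IsQ t * M.Ia t - δ * M.Ia t - ψ * M.Ia t)
          + (k * ω * M.EQ t + χ * M.IsQ t * M.Ia t - δ * M.IaQ t - ψ * M.IaQ t)
          + ((1 - k) * ω * (M.E t + M.EQ t) + ψ * (M.Ia t + M.IaQ t)
            - δ * M.IsQ t))) t := by
      intro t
      exact HasDerivAt.const_mul δ (((M.hIa t).add (M.hIaQ t)).add (M.hIsQ t))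
    have key : Tendsto (fun t => δ * (M.Ia t + M.IaQ t + M.IsQ t)) atTop (nhds 0) := by
      apply barbalat (C := δ * (2 * ω + 3 * δ)) (B := (1:ℝ))
        (by positivity) hF hf
      · intro t ht
        obtain ⟨hS0, hSQ0, hE0, hEQ0, hIa0, hIaQ0, hIsQ0, hR0, hRQ0⟩ := hnn t ht
        have hs := hsum t
        have hE1 : M.E t ≤ 1 := by linarith
        have hEQ1 : M.EQ t ≤ 1 := by linarith
        have hIa1 : M.Ia t ≤ 1 := by linarith
        have hIaQ1 : M.IaQ t ≤ 1 := by linarith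
        have hIsQ1 : M.IsQ t ≤ 1 := by linarith
        have e : δ * ((k * ω * M.E t - χ * M.IsQ t * M.Ia t - δ * M.Ia t - ψ * M.Ia t)
            + (k * ω * M.EQ t + χ * M.IsQ t * M.Ia t - δ * M.IaQ t - ψ * M.IaQ t)
            + ((1 - k) * ω * (M.E t + M.EQ t) + ψ * (M.Ia t + M.IaQ t)
              - δ * M.IsQ t))
            = δ * (ω * (M.E t + M.EQ t) - δ * (M.Ia t + M.IaQ t + M.IsQ t)) := by
          ring
        rw [e, abs_le]
        have hδω : (0:ℝ) ≤ δ * ω := mul_nonneg hδ.le hω.le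
        have hδδ : (0:ℝ) ≤ δ * δ := mul_nonneg hδ.le hδ.le
        have m1 := mul_le_mul_of_nonneg_left hE1 hδω
        have m1' := mul_nonneg hδω hE0
        have m2 := mul_le_mul_of_nonneg_left hEQ1 hδω
        have m2' := mul_nonneg hδω hEQ0
        have n1 := mul_le_mul_of_nonneg_left hIa1 hδδ
        have n1' := mul_nonneg hδδ hIa0
        have n2 := mul_le_mul_of_nonneg_left hIaQ1 hδδ
        have n2' := mul_nonneg hδδ hIaQ0
        have n3 := mul_le_mul_of_nonneg_left hIsQ1 hδδ
        have n3' := mul_nonneg hδδ hIsQ0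
        constructor
        · nlinarith
        · nlinarith
      · intro t ht
        obtain ⟨hS0, hSQ0, hE0, hEQ0, hIa0, hIaQ0, hIsQ0, hR0, hRQ0⟩ := hnn t ht
        positivity
      · intro t ht
        obtain ⟨hS0, hSQ0, hE0, hEQ0, hIa0, hIaQ0, hIsQ0, hR0, hRQ0⟩ := hnn t ht
        linarith [hsum t]
    have heq : (fun t => M.Ia t + M.IaQ t + M.IsQ t)
        = fun t => δ⁻¹ * (δ * (M.Ia t + M.IaQ t + M.IsQ t)) := by
      funext t
      field_simp
    rw [heq]
    have := key.const_mul δ⁻¹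
    simpa using this
  exact ⟨part1, part2⟩
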